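/- (Proposition 3.1, strong duality.) Assume problem (P1) admits a strictly feasible point (i.e., a feasible point at which all SINR constraints and all power constraints hold with strict inequality). Then the optimal value of the dual problem (D1), namely sup over μ_i ≥ 0, ν_i ≥ 0 of the dual function g({μ_i},{ν_i}), equals the optimal value (infimum) of the primal problem (P1), even though (P1) as stated is non-convex. -/

import Mathlib

open scoped BigOperators ComplexConjugate

noncomputable section

/-- `hip h w = h^H w`, the Hermitian inner product used in the paper. -/
def hip {n : ℕ} (h w : Fin n → ℂ) : ℂ := ∑ x, (starRingEnd ℂ) (h x) * w x

/-- `bpow M i w = w^H B_i w`, the power contributed by the antennas of BS `i`. -/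
def bpow (M : ℕ) {n : ℕ} (i : ℕ) (w : Fin n → ℂ) : ℝ :=
  ∑ x : Fin n, if (x : ℕ) / M = i then Complex.normSq (w x) else 0

/-- The SINR of user `k` for beamformers `w`. -/
def SINR {n K : ℕ} (h : Fin K → Fin n → ℂ) (σ : Fin K → ℝ)
    (w : Fin K → Fin n → ℂ) (k : Fin K) : ℝ :=
  Complex.normSq (hip (h k) (w k)) /
    ((∑ l ∈ Finset.univ.erase k, Complex.normSq (hip (h k) (w l))) + (σ k) ^ 2)

/-- The total energy cost `Σ_i (α_{b,i} G_{b,i} − α_{s,i} G_{s,i})`. -/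
def cost {N : ℕ} (αb αs Gb Gs : Fin N → ℝ) : ℝ := ∑ i, (αb i * Gb i - αs i * Gs i)

/-- Feasibility for problem (P1). -/
def FeasP1 {M N K : ℕ} (h : Fin K → Fin (M * N) → ℂ) (σ γ : Fin K → ℝ)
    (E Pc Pmax : Fin N → ℝ) (w : Fin K → Fin (M * N) → ℂ) (Gb Gs : Fin N → ℝ) : Prop :=
  (∀ k, γ k ≤ SINR h σ w k) ∧
  (∀ i : Fin N, (∑ k, bpow M (i : ℕ) (w k)) + Pc i ≤ E i + Gb i - Gs i) ∧
  (∀ i : Fin N, (∑ k, bpow M (i : ℕ) (w k)) ≤ Pmax i) ∧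
  (∀ i, 0 ≤ Gb i) ∧ (∀ i, 0 ≤ Gs i)

/-- The optimal value (infimum) of problem (P1), as an extended real. -/
def valP1 {M N K : ℕ} (h : Fin K → Fin (M * N) → ℂ) (σ γ : Fin K → ℝ)
    (αb αs E Pc Pmax : Fin N → ℝ) : EReal :=
  sInf {c : EReal | ∃ (w : Fin K → Fin (M * N) → ℂ) (Gb Gs : Fin N → ℝ),
    FeasP1 h σ γ E Pc Pmax w Gb Gs ∧ c = (cost αb αs Gb Gs : ℝ)}

/-- The partial Lagrangian `L({w_k},{G_b,i},{G_s,i},{μ_i},{ν_i})` of (P1). -/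
def lagr {M N K : ℕ} (αb αs E Pc Pmax μ ν : Fin N → ℝ)
    (w : Fin K → Fin (M * N) → ℂ) (Gb Gs : Fin N → ℝ) : ℝ :=
  (∑ k, ∑ i : Fin N, (μ i + ν i) * bpow M (i : ℕ) (w k))
    + (∑ i, (αb i - μ i) * Gb i) + (∑ i, (μ i - αs i) * Gs i)
    + (∑ i, (Pc i - E i) * μ i) - ∑ i, Pmax i * ν i

/-- The dual function `g({μ_i},{ν_i})`: the infimum of the Lagrangian over all
`G_b,i ≥ 0`, `G_s,i ≥ 0` and all beamformers satisfying the SINR constraints. -/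
def dualg {M N K : ℕ} (h : Fin K → Fin (M * N) → ℂ) (σ γ : Fin K → ℝ)
    (αb αs E Pc Pmax μ ν : Fin N → ℝ) : EReal :=
  sInf {c : EReal | ∃ (w : Fin K → Fin (M * N) → ℂ) (Gb Gs : Fin N → ℝ),
    (∀ i, 0 ≤ Gb i) ∧ (∀ i, 0 ≤ Gs i) ∧ (∀ k, γ k ≤ SINR h σ w k) ∧
    c = (lagr αb αs E Pc Pmax μ ν w Gb Gs : ℝ)}

/-- Proposition 3.1, strong duality: if (P1) has a strictly feasible
point, then the optimal value of the dual problem (D1) equals the optimal value of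
the primal problem (P1). -/
lemma hip_combo {n : ℕ} (h v v' : Fin n → ℂ) (c d : ℂ) :
    hip h (fun x => c * v x + d * v' x) = c * hip h v + d * hip h v' := by
  simp only [hip, Finset.mul_sum, ← Finset.sum_add_distrib]
  exact Finset.sum_congr rfl fun x _ => by ring

lemma hip_smul {n : ℕ} (h v : Fin n → ℂ) (c : ℂ) :
    hip h (fun x => c * v x) = c * hip h v := by
  simp only [hip, Finset.mul_sum]
  exact Finset.sum_congr rfl fun x _ => by ring

lemma normSq_combo_le (z z' : ℂ) {a b : ℝ} (ha : 0 ≤ a) (hb : 0 ≤ b) (hab : a + b = 1) :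
    Complex.normSq ((a:ℂ) * z + (b:ℂ) * z') ≤ a * Complex.normSq z + b * Complex.normSq z' := by
  have h1 : ‖(a:ℂ)*z + (b:ℂ)*z'‖ ≤ a * ‖z‖ + b * ‖z'‖ := by
    calc ‖(a:ℂ)*z + (b:ℂ)*z'‖ ≤ ‖(a:ℂ)*z‖ + ‖(b:ℂ)*z'‖ :=
          norm_add_le _ _
    _ = a * ‖z‖ + b * ‖z'‖ := by
          simp [norm_mul, Complex.norm_real, abs_of_nonneg ha, abs_of_nonneg hb]
  have h0 : (0:ℝ) ≤ ‖(a:ℂ)*z + (b:ℂ)*z'‖ := norm_nonneg _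
  rw [← Complex.sq_norm, ← Complex.sq_norm z, ← Complex.sq_norm z']
  nlinarith [norm_nonneg z, norm_nonneg z',
    sq_nonneg (‖z‖ - ‖z'‖), mul_nonneg ha hb]

lemma bpow_nonneg (M : ℕ) {n : ℕ} (i : ℕ) (w : Fin n → ℂ) : 0 ≤ bpow M i w :=
  Finset.sum_nonneg fun x _ => by
    by_cases hc : (x:ℕ)/M = i <;> simp [hc, Complex.normSq_nonneg]

lemma bpow_combo_le (M : ℕ) {n : ℕ} (i : ℕ) (w w' : Fin n → ℂ) {a b : ℝ}
    (ha : 0 ≤ a) (hb : 0 ≤ b) (hab : a + b = 1) :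
    bpow M i (fun x => (a:ℂ) * w x + (b:ℂ) * w' x) ≤ a * bpow M i w + b * bpow M i w' := by
  simp only [bpow, Finset.mul_sum, ← Finset.sum_add_distrib]
  apply Finset.sum_le_sum; intro x _
  by_cases hc : (x:ℕ)/M = i
  · simpa [hc] using normSq_combo_le (w x) (w' x) ha hb hab
  · simp [hc]

lemma bpow_unit (M : ℕ) {n : ℕ} (i : ℕ) (c : ℂ) (hc : Complex.normSq c = 1) (w : Fin n → ℂ) :
    bpow M i (fun x => c * w x) = bpow M i w := by
  unfold bpow
  exact Finset.sum_congr rfl fun x _ => by by_cases h : (x:ℕ)/M = i <;>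
    simp [h, Complex.normSq_mul, hc]

lemma sinr_den_pos {n K : ℕ} (h : Fin K → Fin n → ℂ) (σ : Fin K → ℝ)
    (w : Fin K → Fin n → ℂ) (k : Fin K) (hσ : 0 < σ k) :
    0 < (∑ l ∈ Finset.univ.erase k, Complex.normSq (hip (h k) (w l))) + (σ k) ^ 2 :=
  add_pos_of_nonneg_of_pos (Finset.sum_nonneg fun _ _ => Complex.normSq_nonneg _) (pow_pos hσ 2)

lemma sinr_le_iff {n K : ℕ} (h : Fin K → Fin n → ℂ) (σ : Fin K → ℝ)
    (w : Fin K → Fin n → ℂ) (k : Fin K) (hσ : 0 < σ k) (γ : ℝ) :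
    γ ≤ SINR h σ w k ↔
      γ * ((∑ l ∈ Finset.univ.erase k, Complex.normSq (hip (h k) (w l))) + (σ k) ^ 2)
        ≤ Complex.normSq (hip (h k) (w k)) :=
  le_div_iff₀ (sinr_den_pos h σ w k hσ)

/-- Phase rotation: any SINR-feasible `w` can be rotated user-by-user so that each
`h_k^H w_k` becomes a nonnegative real, preserving all moduli. -/
lemma phase_exists {n K : ℕ} (h : Fin K → Fin n → ℂ) (σ γ : Fin K → ℝ)
    (hσ : ∀ k, 0 < σ k) (hγ : ∀ k, 0 < γ k)
    (w : Fin K → Fin n → ℂ) (hw : ∀ k, γ k ≤ SINR h σ w k) :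
    ∃ c : Fin K → ℂ, (∀ k, Complex.normSq (c k) = 1) ∧
      (∀ k, hip (h k) (fun x => c k * w k x) = ((‖hip (h k) (w k)‖ : ℝ) : ℂ)) := by
  have hz : ∀ k, hip (h k) (w k) ≠ 0 := by
    intro k hzk
    have := (sinr_le_iff h σ w k (hσ k) (γ k)).mp (hw k)
    rw [hzk] at this
    simp only [map_zero] at this
    nlinarith [sinr_den_pos h σ w k (hσ k), hγ k]
  refine ⟨fun k => (starRingEnd ℂ) (hip (h k) (w k)) / ((‖hip (h k) (w k)‖ : ℝ) : ℂ),
    fun k => ?_, fun k => ?_⟩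
  · have : ‖hip (h k) (w k)‖ ≠ 0 := by
      simpa [norm_eq_zero] using hz k
    rw [Complex.normSq_div]
    simp [Complex.normSq_conj, Complex.normSq_ofReal, ← Complex.sq_norm, this]
  · have habs : ‖hip (h k) (w k)‖ ≠ 0 := by
      simpa [norm_eq_zero] using hz k
    rw [hip_smul]
    rw [div_mul_eq_mul_div, mul_comm, Complex.mul_conj]
    rw [← Complex.sq_norm]
    rw [div_eq_iff (by exact_mod_cast habs)]
    push_cast
    ring

/-- Hidden convexity: convex combination (after per-user phase rotation) of two
SINR-feasible beamformer profiles is SINR-feasible with componentwise smaller powers. -/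
lemma HC {n K : ℕ} (h : Fin K → Fin n → ℂ) (σ γ : Fin K → ℝ)
    (hσ : ∀ k, 0 < σ k) (hγ : ∀ k, 0 < γ k)
    (w w' : Fin K → Fin n → ℂ) (hw : ∀ k, γ k ≤ SINR h σ w k) (hw' : ∀ k, γ k ≤ SINR h σ w' k)
    {a b : ℝ} (ha : 0 ≤ a) (hb : 0 ≤ b) (hab : a + b = 1) :
    ∃ w'' : Fin K → Fin n → ℂ, (∀ k, γ k ≤ SINR h σ w'' k) ∧
      ∀ (M i : ℕ), ∀ k, bpow M i (w'' k) ≤ a * bpow M i (w k) + b * bpow M i (w' k) := by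
  obtain ⟨c, hc1, hc2⟩ := phase_exists h σ γ hσ hγ w hw
  obtain ⟨c', hc1', hc2'⟩ := phase_exists h σ γ hσ hγ w' hw'
  refine ⟨fun k x => (a:ℂ) * (c k * w k x) + (b:ℂ) * (c' k * w' k x), ?_, ?_⟩
  · intro k
    set u : EuclideanSpace ℂ (Fin K) :=
      WithLp.toLp 2 (fun l => if l = k then (σ k : ℂ) else hip (h k) (fun x => c l * w l x)) with hu
    set u' : EuclideanSpace ℂ (Fin K) :=
      WithLp.toLp 2 (fun l => if l = k then (σ k : ℂ) else hip (h k) (fun x => c' l * w' l x)) with hu'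
    have normsq_eucl : ∀ v : EuclideanSpace ℂ (Fin K), ‖v‖^2 = ∑ l, Complex.normSq (v l) := by
      intro v
      rw [EuclideanSpace.norm_eq, Real.sq_sqrt (Finset.sum_nonneg fun l _ => sq_nonneg _)]
      exact Finset.sum_congr rfl fun l _ => by rw [Complex.sq_norm]
    have split_sum : ∀ v : EuclideanSpace ℂ (Fin K), v k = (σ k : ℂ) →
        ‖v‖^2 = (∑ l ∈ Finset.univ.erase k, Complex.normSq (v l)) + (σ k)^2 := by
      intro v hv
      rw [normsq_eucl v, ← Finset.add_sum_erase _ _ (Finset.mem_univ k), hv]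
      rw [Complex.normSq_ofReal]
      ring
    have hukk : u k = (σ k : ℂ) := by simp [hu]
    have hukk' : u' k = (σ k : ℂ) := by simp [hu']
    have hnu : ‖u‖^2 = (∑ l ∈ Finset.univ.erase k, Complex.normSq (hip (h k) (w l))) + (σ k)^2 := by
      rw [split_sum u hukk]
      congr 1
      refine Finset.sum_congr rfl fun l hl => ?_
      rw [Finset.mem_erase] at hl
      simp only [hu, if_neg hl.1]
      rw [hip_smul, Complex.normSq_mul, hc1 l, one_mul]
    have hnu' : ‖u'‖^2 = (∑ l ∈ Finset.univ.erase k, Complex.normSq (hip (h k) (w' l))) + (σ k)^2 := by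
      rw [split_sum u' hukk']
      congr 1
      refine Finset.sum_congr rfl fun l hl => ?_
      rw [Finset.mem_erase] at hl
      simp only [hu', if_neg hl.1]
      rw [hip_smul, Complex.normSq_mul, hc1' l, one_mul]
    set A := ‖hip (h k) (w k)‖ with hA
    set A' := ‖hip (h k) (w' k)‖ with hA'
    have hAnn : 0 ≤ A := norm_nonneg _
    have hAnn' : 0 ≤ A' := norm_nonneg _
    have hF2 : γ k * ‖u‖^2 ≤ A^2 := by
      rw [hnu, hA, Complex.sq_norm]; exact (sinr_le_iff h σ w k (hσ k) (γ k)).mp (hw k)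
    have hF2' : γ k * ‖u'‖^2 ≤ A'^2 := by
      rw [hnu', hA', Complex.sq_norm]; exact (sinr_le_iff h σ w' k (hσ k) (γ k)).mp (hw' k)
    set g := Real.sqrt (γ k) with hg
    have hg2 : g^2 = γ k := Real.sq_sqrt (hγ k).le
    have hgnn : 0 ≤ g := Real.sqrt_nonneg _
    have hF3 : g * ‖u‖ ≤ A := by
      nlinarith [norm_nonneg u, hF2, hg2]
    have hF3' : g * ‖u'‖ ≤ A' := by
      nlinarith [norm_nonneg u', hF2', hg2]
    set u'' : EuclideanSpace ℂ (Fin K) := a • u + b • u' with hu''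
    have hu''app : ∀ l, u'' l = (a:ℂ) * u l + (b:ℂ) * u' l := by
      intro l
      simp [hu'', Complex.real_smul]
    have hu''k : u'' k = (σ k : ℂ) := by
      rw [hu''app k, hukk, hukk', ← Complex.ofReal_mul, ← Complex.ofReal_mul,
        ← Complex.ofReal_add, ← add_mul, hab, one_mul]
    have htri : ‖u''‖ ≤ a * ‖u‖ + b * ‖u'‖ := by
      calc ‖u''‖ ≤ ‖a • u‖ + ‖b • u'‖ := norm_add_le _ _
      _ = a * ‖u‖ + b * ‖u'‖ := by
          rw [norm_smul, norm_smul, Real.norm_eq_abs, Real.norm_eq_abs,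
            abs_of_nonneg ha, abs_of_nonneg hb]
    have hnum : hip (h k) (fun x => (a:ℂ) * (c k * w k x) + (b:ℂ) * (c' k * w' k x))
        = ((a * A + b * A' : ℝ) : ℂ) := by
      rw [hip_combo, hc2 k, hc2' k]
      push_cast
      ring
    have hden : ∀ l, l ≠ k →
        hip (h k) (fun x => (a:ℂ) * (c l * w l x) + (b:ℂ) * (c' l * w' l x)) = u'' l := by
      intro l hl
      rw [hip_combo, hu''app l]
      simp only [hu, hu', if_neg hl]
    rw [sinr_le_iff _ _ _ _ (hσ k)]
    have hdensum : (∑ l ∈ Finset.univ.erase k, Complex.normSq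
          (hip (h k) (fun x => (a:ℂ) * (c l * w l x) + (b:ℂ) * (c' l * w' l x)))) + (σ k)^2
        = ‖u''‖^2 := by
      rw [split_sum u'' hu''k]
      congr 1
      exact Finset.sum_congr rfl fun l hl => by
        rw [hden l (Finset.mem_erase.mp hl).1]
    rw [hdensum, hnum, Complex.normSq_ofReal]
    have hcombo : g * ‖u''‖ ≤ a * A + b * A' := by
      calc g * ‖u''‖ ≤ g * (a * ‖u‖ + b * ‖u'‖) :=
            mul_le_mul_of_nonneg_left htri hgnn
      _ = a * (g * ‖u‖) + b * (g * ‖u'‖) := by ring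
      _ ≤ a * A + b * A' :=
            add_le_add (mul_le_mul_of_nonneg_left hF3 ha)
              (mul_le_mul_of_nonneg_left hF3' hb)
    have hsq : (g * ‖u''‖)^2 ≤ (a * A + b * A')^2 :=
      pow_le_pow_left₀ (mul_nonneg hgnn (norm_nonneg _)) hcombo 2
    calc γ k * ‖u''‖^2 = (g * ‖u''‖)^2 := by rw [mul_pow, hg2]
    _ ≤ (a * A + b * A')^2 := hsq
    _ = (a * A + b * A') * (a * A + b * A') := sq (a * A + b * A') ▸ rfl
  · intro M i k
    calc bpow M i (fun x => (a:ℂ) * (c k * w k x) + (b:ℂ) * (c' k * w' k x))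
        ≤ a * bpow M i (fun x => c k * w k x) + b * bpow M i (fun x => c' k * w' k x) :=
          bpow_combo_le M i _ _ ha hb hab
    _ = a * bpow M i (w k) + b * bpow M i (w' k) := by
          rw [bpow_unit M i (c k) (hc1 k) (w k), bpow_unit M i (c' k) (hc1' k) (w' k)]

lemma lagr_eq {M N K : ℕ} (αb αs E Pc Pmax μ ν : Fin N → ℝ)
    (w : Fin K → Fin (M*N) → ℂ) (Gb Gs : Fin N → ℝ) :
    lagr αb αs E Pc Pmax μ ν w Gb Gs
      = cost αb αs Gb Gs
        + (∑ i : Fin N, μ i * ((∑ k, bpow M (i:ℕ) (w k)) + Pc i - E i - Gb i + Gs i))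
        + (∑ i : Fin N, ν i * ((∑ k, bpow M (i:ℕ) (w k)) - Pmax i)) := by
  unfold lagr cost
  rw [Finset.sum_comm]
  simp only [add_mul, mul_add, mul_sub, sub_mul, Finset.sum_add_distrib,
    Finset.sum_sub_distrib, Finset.mul_sum]
  have c1 : ∀ g g' : Fin N → ℝ, (∑ i, g i * g' i) = ∑ i, g' i * g i :=
    fun g g' => Finset.sum_congr rfl fun i _ => mul_comm _ _
  rw [c1 Pc μ, c1 E μ, c1 Pmax ν]
  ring

lemma cost_combo {N : ℕ} (αb αs Gb Gs Gb' Gs' : Fin N → ℝ) (a b : ℝ) :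
    cost αb αs (fun i => a * Gb i + b * Gb' i) (fun i => a * Gs i + b * Gs' i)
      = a * cost αb αs Gb Gs + b * cost αb αs Gb' Gs' := by
  simp only [cost, Finset.mul_sum, ← Finset.sum_add_distrib]
  exact Finset.sum_congr rfl fun i _ => by ring

lemma combo_neg {x y a b : ℝ} (hx : x < 0) (hy : y < 0) (ha : 0 ≤ a) (hb : 0 ≤ b)
    (hab : a + b = 1) : a * x + b * y < 0 := by
  rcases eq_or_lt_of_le ha with h | h
  · have hb1 : b = 1 := by linarith
    simp [← h, hb1, hy]
  · nlinarith [mul_nonpos_iff.mpr (Or.inl ⟨hb, hy.le⟩)]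

lemma combo_lt {x y a b r : ℝ} (hx : x < r) (hy : y < r) (ha : 0 ≤ a) (hb : 0 ≤ b)
    (hab : a + b = 1) : a * x + b * y < r := by
  rcases eq_or_lt_of_le ha with h | h
  · have hb1 : b = 1 := by linarith
    simp [← h, hb1, hy]
  · have hr : a * r + b * r = r := by rw [← add_mul, hab, one_mul]
    have h1 : a * x < a * r := mul_lt_mul_of_pos_left hx h
    have h2 : b * y ≤ b * r := mul_le_mul_of_nonneg_left hy.le hb
    linarith

theorem stmt_6 (M N K : ℕ) (hM : 0 < M) (hN : 0 < N) (hK : 0 < K)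
    (h : Fin K → Fin (M * N) → ℂ) (σ γ : Fin K → ℝ)
    (hσ : ∀ k, 0 < σ k) (hγ : ∀ k, 0 < γ k)
    (αb αs E Pc Pmax : Fin N → ℝ)
    (hα : ∀ i, 0 < αs i ∧ αs i ≤ αb i) (hE : ∀ i, 0 ≤ E i)
    (hPc : ∀ i, 0 < Pc i) (hPmax : ∀ i, 0 < Pmax i)
    (hslater : ∃ (w : Fin K → Fin (M * N) → ℂ) (Gb Gs : Fin N → ℝ),
      (∀ i, 0 ≤ Gb i) ∧ (∀ i, 0 ≤ Gs i) ∧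
      (∀ k, γ k < SINR h σ w k) ∧
      (∀ i : Fin N, (∑ k, bpow M (i : ℕ) (w k)) + Pc i < E i + Gb i - Gs i) ∧
      (∀ i : Fin N, (∑ k, bpow M (i : ℕ) (w k)) < Pmax i)) :
    sSup {v : EReal | ∃ μ ν : Fin N → ℝ, (∀ i, 0 ≤ μ i) ∧ (∀ i, 0 ≤ ν i) ∧
        v = dualg h σ γ αb αs E Pc Pmax μ ν}
      = valP1 h σ γ αb αs E Pc Pmax := by
  classical
  obtain ⟨wS, GbS, GsS, hGbS, hGsS, hsinrS, hpowS, hmaxS⟩ := hslater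
  set PR : Set ℝ :=
    {c | ∃ w Gb Gs, FeasP1 h σ γ E Pc Pmax w Gb Gs ∧ c = cost αb αs Gb Gs} with hPRdef
  have hfeasS : FeasP1 h σ γ E Pc Pmax wS GbS GsS :=
    ⟨fun k => (hsinrS k).le, fun i => (hpowS i).le, fun i => (hmaxS i).le, hGbS, hGsS⟩
  have hPRne : PR.Nonempty := ⟨_, wS, GbS, GsS, hfeasS, rfl⟩
  have hbddPR : BddBelow PR := by
    refine ⟨∑ i, αs i * (Pc i - E i), fun x hx => ?_⟩
    obtain ⟨w, Gb, Gs, hf, rfl⟩ := hx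
    unfold cost
    refine Finset.sum_le_sum fun i _ => ?_
    have hpow : 0 ≤ ∑ k, bpow M (i:ℕ) (w k) :=
      Finset.sum_nonneg fun k _ => bpow_nonneg _ _ _
    have hGbi : Gs i + Pc i - E i ≤ Gb i := by have := hf.2.1 i; linarith
    have hGb0 : 0 ≤ Gb i := hf.2.2.2.1 i
    have hGs0 : 0 ≤ Gs i := hf.2.2.2.2 i
    obtain ⟨hαs, hαab⟩ := hα i
    by_cases hcase : 0 ≤ Gs i + Pc i - E i
    · nlinarith [mul_le_mul_of_nonneg_right hαab hcase,
        mul_le_mul_of_nonneg_left hGbi (by linarith : (0:ℝ) ≤ αb i)]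
    · nlinarith [mul_nonneg (by linarith : (0:ℝ) ≤ αb i) hGb0,
        mul_le_mul_of_nonneg_left (by linarith : Gs i ≤ E i - Pc i) hαs.le]
  set r := sInf PR with hrdef
  have hrle : ∀ x ∈ PR, r ≤ x := fun x hx => csInf_le hbddPR hx
  have hval : valP1 h σ γ αb αs E Pc Pmax = (r : EReal) := by
    have himg : {c : EReal | ∃ (w : Fin K → Fin (M * N) → ℂ) (Gb Gs : Fin N → ℝ),
          FeasP1 h σ γ E Pc Pmax w Gb Gs ∧ c = ((cost αb αs Gb Gs : ℝ) : EReal)}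
        = (fun x : ℝ => (x : EReal)) '' PR := by
      ext cE
      constructor
      · rintro ⟨w, Gb, Gs, hf, rfl⟩; exact ⟨_, ⟨w, Gb, Gs, hf, rfl⟩, rfl⟩
      · rintro ⟨x, ⟨w, Gb, Gs, hf, rfl⟩, rfl⟩; exact ⟨w, Gb, Gs, hf, rfl⟩
    rw [valP1, himg,
      ← Monotone.map_csInf_of_continuousAt (continuous_coe_real_ereal.continuousAt)
        (fun x y hxy => EReal.coe_le_coe_iff.mpr hxy) hPRne hbddPR]
  -- weak duality
  have hweak : ∀ μ ν : Fin N → ℝ, (∀ i, 0 ≤ μ i) → (∀ i, 0 ≤ ν i) →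
      dualg h σ γ αb αs E Pc Pmax μ ν ≤ valP1 h σ γ αb αs E Pc Pmax := by
    intro μ ν hμ hν
    refine le_sInf fun cE hcE => ?_
    obtain ⟨w, Gb, Gs, hf, rfl⟩ := hcE
    rw [dualg]
    have hle : lagr αb αs E Pc Pmax μ ν w Gb Gs ≤ cost αb αs Gb Gs := by
      rw [lagr_eq]
      have h1 : (∑ i : Fin N, μ i * ((∑ k, bpow M (i:ℕ) (w k)) + Pc i - E i - Gb i + Gs i)) ≤ 0 :=
        Finset.sum_nonpos fun i _ =>
          mul_nonpos_iff.mpr (Or.inl ⟨hμ i, by have := hf.2.1 i; linarith⟩)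
      have h2 : (∑ i : Fin N, ν i * ((∑ k, bpow M (i:ℕ) (w k)) - Pmax i)) ≤ 0 :=
        Finset.sum_nonpos fun i _ =>
            mul_nonpos_iff.mpr (Or.inl ⟨hν i, by have := hf.2.2.1 i; linarith⟩)
      linarith
    refine le_trans (sInf_le ?_) (EReal.coe_le_coe_iff.mpr hle)
    exact ⟨w, Gb, Gs, hf.2.2.2.1, hf.2.2.2.2, hf.1, rfl⟩
  -- separation argument
  set AA : Set ((Fin N → ℝ) × (Fin N → ℝ) × ℝ) :=
    {p | ∃ w Gb Gs, (∀ k, γ k ≤ SINR h σ w k) ∧ (∀ i, 0 ≤ Gb i) ∧ (∀ i, 0 ≤ Gs i) ∧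
      (∀ i : Fin N, (∑ k, bpow M (i:ℕ) (w k)) + Pc i - E i - Gb i + Gs i ≤ p.1 i) ∧
      (∀ i : Fin N, (∑ k, bpow M (i:ℕ) (w k)) - Pmax i ≤ p.2.1 i) ∧
      cost αb αs Gb Gs ≤ p.2.2} with hAAdef
  set BB : Set ((Fin N → ℝ) × (Fin N → ℝ) × ℝ) :=
    {p | (∀ i, p.1 i < 0) ∧ (∀ i, p.2.1 i < 0) ∧ p.2.2 < r} with hBBdef
  have hBBconv : Convex ℝ BB := by
    rintro p ⟨hp1, hp2, hp3⟩ q ⟨hq1, hq2, hq3⟩ a b ha hb hab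
    rw [hBBdef]
    refine ⟨fun i => ?_, fun i => ?_, ?_⟩
    · have e : (a • p + b • q).1 i = a * p.1 i + b * q.1 i := by
        simp [Prod.smul_fst, Prod.fst_add]
      rw [e]; exact combo_neg (hp1 i) (hq1 i) ha hb hab
    · have e : (a • p + b • q).2.1 i = a * p.2.1 i + b * q.2.1 i := by
        simp [Prod.smul_snd, Prod.snd_add, Prod.smul_fst, Prod.fst_add]
      rw [e]; exact combo_neg (hp2 i) (hq2 i) ha hb hab
    · have e : (a • p + b • q).2.2 = a * p.2.2 + b * q.2.2 := by
        simp [Prod.smul_snd, Prod.snd_add]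
      rw [e]; exact combo_lt hp3 hq3 ha hb hab
  have hBBopen : IsOpen BB := by
    have hBBeq : BB = (⋂ i, {p : (Fin N → ℝ) × (Fin N → ℝ) × ℝ | p.1 i < 0}) ∩
        ((⋂ i, {p : (Fin N → ℝ) × (Fin N → ℝ) × ℝ | p.2.1 i < 0}) ∩
          {p : (Fin N → ℝ) × (Fin N → ℝ) × ℝ | p.2.2 < r}) := by
      ext p
      simp only [hBBdef, Set.mem_setOf_eq, Set.mem_inter_iff, Set.mem_iInter]
    rw [hBBeq]
    refine IsOpen.inter (isOpen_iInter_of_finite fun i => ?_)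
      (IsOpen.inter (isOpen_iInter_of_finite fun i => ?_) ?_)
    · exact isOpen_lt ((continuous_apply i).comp continuous_fst) continuous_const
    · exact isOpen_lt ((continuous_apply i).comp (continuous_fst.comp continuous_snd))
        continuous_const
    · exact isOpen_lt (continuous_snd.comp continuous_snd) continuous_const
  have hAAconv : Convex ℝ AA := by
    rintro p ⟨w1, Gb1, Gs1, hs1, hGb1, hGs1, hc1, hc2, hc3⟩
      q ⟨w2, Gb2, Gs2, hs2, hGb2, hGs2, hd1, hd2, hd3⟩ a b ha hb hab
    obtain ⟨w3, hs3, hp3⟩ := HC h σ γ hσ hγ w1 w2 hs1 hs2 ha hb hab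
    rw [hAAdef]
    refine ⟨w3, fun i => a * Gb1 i + b * Gb2 i, fun i => a * Gs1 i + b * Gs2 i, hs3,
      fun i => add_nonneg (mul_nonneg ha (hGb1 i)) (mul_nonneg hb (hGb2 i)),
      fun i => add_nonneg (mul_nonneg ha (hGs1 i)) (mul_nonneg hb (hGs2 i)), ?_, ?_, ?_⟩
    · intro i
      have hpw : (∑ k, bpow M (i:ℕ) (w3 k))
          ≤ a * (∑ k, bpow M (i:ℕ) (w1 k)) + b * (∑ k, bpow M (i:ℕ) (w2 k)) := by
        rw [Finset.mul_sum, Finset.mul_sum, ← Finset.sum_add_distrib]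
        exact Finset.sum_le_sum fun k _ => hp3 M (i:ℕ) k
      have e1 := mul_le_mul_of_nonneg_left (hc1 i) ha
      have e2 := mul_le_mul_of_nonneg_left (hd1 i) hb
      have hfst : (a • p + b • q).1 i = a * p.1 i + b * q.1 i := by
        simp [Prod.smul_fst, Prod.fst_add]
      rw [hfst]
      beta_reduce
      have k1 : a * Pc i + b * Pc i = Pc i := by rw [← add_mul, hab, one_mul]
      have k2 : a * E i + b * E i = E i := by rw [← add_mul, hab, one_mul]
      linarith
    · intro i
      have hpw : (∑ k, bpow M (i:ℕ) (w3 k))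
          ≤ a * (∑ k, bpow M (i:ℕ) (w1 k)) + b * (∑ k, bpow M (i:ℕ) (w2 k)) := by
        rw [Finset.mul_sum, Finset.mul_sum, ← Finset.sum_add_distrib]
        exact Finset.sum_le_sum fun k _ => hp3 M (i:ℕ) k
      have e1 := mul_le_mul_of_nonneg_left (hc2 i) ha
      have e2 := mul_le_mul_of_nonneg_left (hd2 i) hb
      have hfst : (a • p + b • q).2.1 i = a * p.2.1 i + b * q.2.1 i := by
        simp [Prod.smul_snd, Prod.snd_add, Prod.smul_fst, Prod.fst_add]
      rw [hfst]
      beta_reduce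
      have k3 : a * Pmax i + b * Pmax i = Pmax i := by rw [← add_mul, hab, one_mul]
      linarith
    · have hsnd : (a • p + b • q).2.2 = a * p.2.2 + b * q.2.2 := by
        simp [Prod.smul_snd, Prod.snd_add]
      rw [hsnd, cost_combo]
      exact add_le_add (mul_le_mul_of_nonneg_left hc3 ha) (mul_le_mul_of_nonneg_left hd3 hb)
  have hdisj : Disjoint BB AA := by
    rw [Set.disjoint_left]
    rintro p ⟨hb1, hb2, hb3⟩ ⟨w, Gb, Gs, hsin, hGb, hGs, hc1, hc2, hc3⟩
    have hfeas : FeasP1 h σ γ E Pc Pmax w Gb Gs :=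
      ⟨hsin, fun i => by have := hc1 i; have := (hb1 i).le; linarith,
        fun i => by have := hc2 i; have := (hb2 i).le; linarith, hGb, hGs⟩
    have := hrle _ ⟨w, Gb, Gs, hfeas, rfl⟩
    linarith
  obtain ⟨f, cS, hfB, hfA⟩ := geometric_hahn_banach_open hBBconv hBBopen hAAconv hdisj
  set φ : Fin N → ℝ := fun i => f ((Pi.single i 1 : Fin N → ℝ), 0, 0) with hφdef
  set ψ : Fin N → ℝ := fun i => f (0, (Pi.single i 1 : Fin N → ℝ), 0) with hψdef
  set τ : ℝ := f (0, 0, 1) with hτdef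
  have hrep : ∀ p : (Fin N → ℝ) × (Fin N → ℝ) × ℝ,
      f p = (∑ i, φ i * p.1 i) + (∑ i, ψ i * p.2.1 i) + τ * p.2.2 := by
    intro p
    have hdecomp : p = (∑ i, p.1 i • (((Pi.single i 1 : Fin N → ℝ), (0 : Fin N → ℝ), (0:ℝ))))
        + (∑ i, p.2.1 i • (((0 : Fin N → ℝ), (Pi.single i 1 : Fin N → ℝ), (0:ℝ))))
        + p.2.2 • (((0 : Fin N → ℝ), (0 : Fin N → ℝ), (1:ℝ))) := by
      refine Prod.ext ?_ (Prod.ext ?_ ?_)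
      · simp only [Prod.fst_add, Prod.fst_sum, Prod.smul_fst, Prod.smul_snd, Prod.snd_sum,
          smul_zero, Finset.sum_const_zero, add_zero]
        funext j
        simp [Pi.single_apply, Finset.sum_apply, Finset.sum_ite_eq', mul_comm]
      · simp only [Prod.fst_add, Prod.snd_add, Prod.fst_sum, Prod.snd_sum, Prod.smul_fst,
          Prod.smul_snd, smul_zero, Finset.sum_const_zero, add_zero, zero_add]
        funext j
        simp [Pi.single_apply, Finset.sum_apply, Finset.sum_ite_eq', mul_comm]
      · simp [Prod.snd_add, Prod.snd_sum, Prod.smul_snd]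
    calc f p = f ((∑ i, p.1 i • (((Pi.single i 1 : Fin N → ℝ), (0 : Fin N → ℝ), (0:ℝ))))
        + (∑ i, p.2.1 i • (((0 : Fin N → ℝ), (Pi.single i 1 : Fin N → ℝ), (0:ℝ))))
        + p.2.2 • (((0 : Fin N → ℝ), (0 : Fin N → ℝ), (1:ℝ)))) := by rw [← hdecomp]
    _ = (∑ i, φ i * p.1 i) + (∑ i, ψ i * p.2.1 i) + τ * p.2.2 := by
        rw [map_add, map_add, map_sum, map_sum, map_smul]
        simp only [map_smul, smul_eq_mul]
        congr 1
        · congr 1 <;> exact Finset.sum_congr rfl fun i _ => mul_comm _ _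
        · exact mul_comm _ _
  have hb0mem : (((fun _ => (-1:ℝ)) : Fin N → ℝ), ((fun _ => (-1:ℝ)) : Fin N → ℝ), r - 1) ∈ BB := by
    rw [hBBdef]
    exact ⟨fun i => by norm_num, fun i => by norm_num, by show r - 1 < r; linarith⟩
  have hfb0 := hfB _ hb0mem
  have hkey : ∀ d : (Fin N → ℝ) × (Fin N → ℝ) × ℝ,
      (∀ i, d.1 i ≤ 0) → (∀ i, d.2.1 i ≤ 0) → d.2.2 ≤ 0 → f d ≤ 0 := by
    intro d h1 h2 h3
    by_contra hpos
    push_neg at hpos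
    set t := (cS - f (((fun _ => (-1:ℝ)) : Fin N → ℝ), ((fun _ => (-1:ℝ)) : Fin N → ℝ), r - 1))
      / (f d) with htdef
    have ht : 0 < t := div_pos (by linarith) hpos
    have hmem : (((fun _ => (-1:ℝ)) : Fin N → ℝ), ((fun _ => (-1:ℝ)) : Fin N → ℝ), r - 1)
        + t • d ∈ BB := by
      rw [hBBdef]
      refine ⟨fun i => ?_, fun i => ?_, ?_⟩
      · have htd : t * d.1 i ≤ 0 := mul_nonpos_iff.mpr (Or.inl ⟨ht.le, h1 i⟩)
        simp only [Prod.fst_add, Prod.smul_fst, Pi.add_apply, Pi.smul_apply, smul_eq_mul]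
        beta_reduce
        linarith
      · have htd : t * d.2.1 i ≤ 0 := mul_nonpos_iff.mpr (Or.inl ⟨ht.le, h2 i⟩)
        simp only [Prod.snd_add, Prod.smul_snd, Prod.fst_add, Prod.smul_fst, Pi.add_apply,
          Pi.smul_apply, smul_eq_mul]
        beta_reduce
        linarith
      · have htd : t * d.2.2 ≤ 0 := mul_nonpos_iff.mpr (Or.inl ⟨ht.le, h3⟩)
        simp only [Prod.snd_add, Prod.smul_snd, smul_eq_mul]
        linarith
    have hlt := hfB _ hmem
    rw [map_add, map_smul, smul_eq_mul] at hlt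
    rw [htdef, div_mul_cancel₀ _ (ne_of_gt hpos)] at hlt
    linarith
  have hφnn : ∀ i, 0 ≤ φ i := by
    intro i
    have hφi : φ i = f ((Pi.single i 1 : Fin N → ℝ), 0, 0) := congrFun hφdef i
    have hneg := hkey (-(((Pi.single i 1 : Fin N → ℝ), (0 : Fin N → ℝ), (0:ℝ))))
      (fun j => by by_cases hj : j = i <;> simp [Pi.single_apply, hj])
      (fun j => by simp) (by simp)
    rw [map_neg] at hneg
    rw [hφi]
    linarith
  have hψnn : ∀ i, 0 ≤ ψ i := by
    intro i
    have hψi : ψ i = f (0, (Pi.single i 1 : Fin N → ℝ), 0) := congrFun hψdef i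
    have hneg := hkey (-(((0 : Fin N → ℝ), (Pi.single i 1 : Fin N → ℝ), (0:ℝ))))
      (fun j => by simp)
      (fun j => by by_cases hj : j = i <;> simp [Pi.single_apply, hj]) (by simp)
    rw [map_neg] at hneg
    rw [hψi]
    linarith
  have hτnn : 0 ≤ τ := by
    have hneg := hkey (-(((0 : Fin N → ℝ), (0 : Fin N → ℝ), (1:ℝ))))
      (fun j => by simp) (fun j => by simp) (by simp)
    rw [map_neg] at hneg
    rw [hτdef]
    linarith
  -- the Slater point in AA, with strictly negative slack coordinates
  have hSlaterAA : ((fun i : Fin N => (∑ k, bpow M (i:ℕ) (wS k)) + Pc i - E i - GbS i + GsS i),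
      (fun i : Fin N => (∑ k, bpow M (i:ℕ) (wS k)) - Pmax i), cost αb αs GbS GsS) ∈ AA := by
    rw [hAAdef]
    exact ⟨wS, GbS, GsS, fun k => (hsinrS k).le, hGbS, hGsS,
      fun i => le_rfl, fun i => le_rfl, le_rfl⟩
  have hfS := hfA _ hSlaterAA
  have hrepS : f ((fun i : Fin N => (∑ k, bpow M (i:ℕ) (wS k)) + Pc i - E i - GbS i + GsS i),
      (fun i : Fin N => (∑ k, bpow M (i:ℕ) (wS k)) - Pmax i), cost αb αs GbS GsS)
      = (∑ i, φ i * ((∑ k, bpow M (i:ℕ) (wS k)) + Pc i - E i - GbS i + GsS i))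
        + (∑ i, ψ i * ((∑ k, bpow M (i:ℕ) (wS k)) - Pmax i))
        + τ * cost αb αs GbS GsS := hrep _
  rw [hrepS] at hfS
  set ST : ℝ := (∑ i, φ i) + (∑ i, ψ i) + τ with hSTdef
  have hSTnn : 0 ≤ ST := by
    rw [hSTdef]
    exact add_nonneg (add_nonneg (Finset.sum_nonneg fun i _ => hφnn i)
      (Finset.sum_nonneg fun i _ => hψnn i)) hτnn
  have hline : ∀ ε : ℝ, 0 < ε → τ * r - ε * ST < cS := by
    intro ε hε
    have hmem : (((fun _ => -ε) : Fin N → ℝ), ((fun _ => -ε) : Fin N → ℝ), r - ε) ∈ BB := by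
      rw [hBBdef]
      exact ⟨fun i => by show -ε < 0; linarith, fun i => by show -ε < 0; linarith, by show r - ε < r; linarith⟩
    have hlt := hfB _ hmem
    have hrepε : f (((fun _ => -ε) : Fin N → ℝ), ((fun _ => -ε) : Fin N → ℝ), r - ε)
        = (∑ i, φ i * (-ε)) + (∑ i, ψ i * (-ε)) + τ * (r - ε) := hrep _
    rw [hrepε] at hlt
    have e1 : (∑ i, φ i * (-ε)) = (∑ i, φ i) * (-ε) := (Finset.sum_mul _ _ _).symm
    have e2 : (∑ i, ψ i * (-ε)) = (∑ i, ψ i) * (-ε) := (Finset.sum_mul _ _ _).symm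
    rw [e1, e2] at hlt
    rw [hSTdef]
    nlinarith [hlt]
  have hSTpos : 0 < ST := by
    rcases hSTnn.lt_or_eq with hlt | heq
    · exact hlt
    · exfalso
      have hsum : (∑ i, φ i) + (∑ i, ψ i) + τ = 0 := by rw [hSTdef] at heq; linarith
      have h1 : 0 ≤ (∑ i, φ i) := Finset.sum_nonneg fun i _ => hφnn i
      have h2 : 0 ≤ (∑ i, ψ i) := Finset.sum_nonneg fun i _ => hψnn i
      have hφsum : (∑ i, φ i) = 0 := by linarith
      have hψsum : (∑ i, ψ i) = 0 := by linarith
      have hτ0 : τ = 0 := by linarith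
      have hφz : ∀ i ∈ Finset.univ, φ i = 0 :=
        (Finset.sum_eq_zero_iff_of_nonneg (fun i _ => hφnn i)).mp hφsum
      have hψz : ∀ i ∈ Finset.univ, ψ i = 0 :=
        (Finset.sum_eq_zero_iff_of_nonneg (fun i _ => hψnn i)).mp hψsum
      have hfzero : ∀ p : (Fin N → ℝ) × (Fin N → ℝ) × ℝ, f p = 0 := by
        intro p
        rw [hrep p]
        rw [Finset.sum_eq_zero fun i _ => by rw [hφz i (Finset.mem_univ i), zero_mul],
          Finset.sum_eq_zero fun i _ => by rw [hψz i (Finset.mem_univ i), zero_mul], hτ0]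
        ring
      rw [hfzero] at hfb0
      have : cS ≤ 0 := by
        have := hfA _ hSlaterAA
        rw [hfzero] at this
        exact this
      linarith
  have hτr : τ * r ≤ cS := by
    by_contra hlt
    push_neg at hlt
    have hε : 0 < (τ * r - cS) / ST := div_pos (by linarith) hSTpos
    have := hline _ hε
    rw [div_mul_cancel₀ _ (ne_of_gt hSTpos)] at this
    linarith
  have hτpos : 0 < τ := by
    rcases hτnn.lt_or_eq with hlt | heq
    · exact hlt
    · exfalso
      have hmemB : ((fun i : Fin N => (∑ k, bpow M (i:ℕ) (wS k)) + Pc i - E i - GbS i + GsS i),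
          (fun i : Fin N => (∑ k, bpow M (i:ℕ) (wS k)) - Pmax i), r - 1) ∈ BB := by
        rw [hBBdef]
        refine ⟨fun i => ?_, fun i => ?_, by show r - 1 < r; linarith⟩
        · show (∑ k, bpow M (i:ℕ) (wS k)) + Pc i - E i - GbS i + GsS i < 0
          have := hpowS i; linarith
        · show (∑ k, bpow M (i:ℕ) (wS k)) - Pmax i < 0
          have := hmaxS i; linarith
      have h1 := hfB _ hmemB
      have hrepB : f ((fun i : Fin N => (∑ k, bpow M (i:ℕ) (wS k)) + Pc i - E i - GbS i + GsS i),
          (fun i : Fin N => (∑ k, bpow M (i:ℕ) (wS k)) - Pmax i), r - 1)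
          = (∑ i, φ i * ((∑ k, bpow M (i:ℕ) (wS k)) + Pc i - E i - GbS i + GsS i))
            + (∑ i, ψ i * ((∑ k, bpow M (i:ℕ) (wS k)) - Pmax i))
            + τ * (r - 1) := hrep _
      rw [hrepB] at h1
      rw [← heq, zero_mul] at h1
      rw [← heq, zero_mul] at hfS
      linarith
  set μ : Fin N → ℝ := fun i => φ i / τ with hμdef
  set ν : Fin N → ℝ := fun i => ψ i / τ with hνdef
  have hμnn : ∀ i, 0 ≤ μ i := by
    intro i
    have : μ i = φ i / τ := congrFun hμdef i
    rw [this]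
    exact div_nonneg (hφnn i) hτpos.le
  have hνnn : ∀ i, 0 ≤ ν i := by
    intro i
    have : ν i = ψ i / τ := congrFun hνdef i
    rw [this]
    exact div_nonneg (hψnn i) hτpos.le
  have hφμ : ∀ i, φ i = τ * μ i := by
    intro i
    have e : μ i = φ i / τ := congrFun hμdef i
    rw [e]
    field_simp
  have hψν : ∀ i, ψ i = τ * ν i := by
    intro i
    have e : ν i = ψ i / τ := congrFun hνdef i
    rw [e]
    field_simp
  have hstrong : (r : EReal) ≤ dualg h σ γ αb αs E Pc Pmax μ ν := by
    refine le_sInf fun cE hcE => ?_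
    obtain ⟨w, Gb, Gs, hGb, hGs, hsin, rfl⟩ := hcE
    rw [EReal.coe_le_coe_iff]
    have hmem : ((fun i : Fin N => (∑ k, bpow M (i:ℕ) (w k)) + Pc i - E i - Gb i + Gs i),
        (fun i : Fin N => (∑ k, bpow M (i:ℕ) (w k)) - Pmax i), cost αb αs Gb Gs) ∈ AA := by
      rw [hAAdef]
      exact ⟨w, Gb, Gs, hsin, hGb, hGs, fun i => le_rfl, fun i => le_rfl, le_rfl⟩
    have hAineq := hfA _ hmem
    have hrepw : f ((fun i : Fin N => (∑ k, bpow M (i:ℕ) (w k)) + Pc i - E i - Gb i + Gs i),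
        (fun i : Fin N => (∑ k, bpow M (i:ℕ) (w k)) - Pmax i), cost αb αs Gb Gs)
        = (∑ i, φ i * ((∑ k, bpow M (i:ℕ) (w k)) + Pc i - E i - Gb i + Gs i))
          + (∑ i, ψ i * ((∑ k, bpow M (i:ℕ) (w k)) - Pmax i))
          + τ * cost αb αs Gb Gs := hrep _
    rw [hrepw] at hAineq
    have e1 : (∑ i, φ i * ((∑ k, bpow M (i:ℕ) (w k)) + Pc i - E i - Gb i + Gs i))
        = τ * (∑ i, μ i * ((∑ k, bpow M (i:ℕ) (w k)) + Pc i - E i - Gb i + Gs i)) := by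
      rw [Finset.mul_sum]
      exact Finset.sum_congr rfl fun i _ => by rw [hφμ i]; ring
    have e2 : (∑ i, ψ i * ((∑ k, bpow M (i:ℕ) (w k)) - Pmax i))
        = τ * (∑ i, ν i * ((∑ k, bpow M (i:ℕ) (w k)) - Pmax i)) := by
      rw [Finset.mul_sum]
      exact Finset.sum_congr rfl fun i _ => by rw [hψν i]; ring
    rw [e1, e2] at hAineq
    have hchain : τ * r ≤ τ * ((∑ i, μ i * ((∑ k, bpow M (i:ℕ) (w k)) + Pc i - E i - Gb i + Gs i))
        + (∑ i, ν i * ((∑ k, bpow M (i:ℕ) (w k)) - Pmax i)) + cost αb αs Gb Gs) := by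
      calc τ * r ≤ cS := hτr
      _ ≤ τ * (∑ i, μ i * ((∑ k, bpow M (i:ℕ) (w k)) + Pc i - E i - Gb i + Gs i))
          + τ * (∑ i, ν i * ((∑ k, bpow M (i:ℕ) (w k)) - Pmax i))
          + τ * cost αb αs Gb Gs := hAineq
      _ = τ * ((∑ i, μ i * ((∑ k, bpow M (i:ℕ) (w k)) + Pc i - E i - Gb i + Gs i))
          + (∑ i, ν i * ((∑ k, bpow M (i:ℕ) (w k)) - Pmax i)) + cost αb αs Gb Gs) := by ring
    have hfin := le_of_mul_le_mul_left hchain hτpos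
    rw [lagr_eq]
    linarith
  apply le_antisymm
  · refine sSup_le fun v hv => ?_
    obtain ⟨μ', ν', hμ', hν', rfl⟩ := hv
    exact hweak μ' ν' hμ' hν'
  · rw [hval]
    exact le_trans hstrong (le_sSup ⟨μ, ν, hμnn, hνnn, rfl⟩)
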